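/- Let f : [0,2π] → ℂ be the restriction to the unit circle (in angular coordinates) of a function holomorphic on an open annulus {z : r < |z| < R} with r < 1 < R. Then the equidistant quadrature error decays exponentially: |(1/M) Σ_{m=0}^{M-1} f(2πm/M) − (1/2π) ∫₀^{2π} f(φ) dφ| = O(ρ^M) as M → ∞, for any ρ with max(r, 1/R) < ρ < 1. -/

import Mathlib

open Complex Finset

lemma sum_root_pow (M : ℕ) (hM : 0 < M) (k : ℕ) :
    ∑ m ∈ range M, (Complex.exp (2 * Real.pi * I * m / M)) ^ k
      = if (M : ℤ) ∣ k then (M : ℂ) else 0 := by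
  have hM0 : (M : ℂ) ≠ 0 := Nat.cast_ne_zero.2 hM.ne'
  have hI : (2 * (Real.pi : ℂ) * I : ℂ) ≠ 0 := by simp [Real.pi_ne_zero, I_ne_zero]
  have h1 : ∀ m : ℕ, (Complex.exp (2 * Real.pi * I * m / M)) ^ k
      = (Complex.exp (2 * Real.pi * I * k / M)) ^ m := by
    intro m
    rw [← Complex.exp_nat_mul, ← Complex.exp_nat_mul]
    ring_nf
  simp only [h1]
  set ζ := Complex.exp (2 * Real.pi * I * k / M) with hζ
  by_cases hd : (M : ℤ) ∣ (k : ℤ)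
  · obtain ⟨n, hn⟩ := hd
    have hζ1 : ζ = 1 := by
      rw [hζ]
      have h2 : (2 * Real.pi * I * k / M : ℂ) = n * (2 * Real.pi * I) := by
        have h3 : (k : ℂ) = (M : ℂ) * (n : ℂ) := by exact_mod_cast hn
        field_simp [h3]; ring_nf; exact h3
      rw [h2, Complex.exp_int_mul_two_pi_mul_I]
    rw [if_pos ⟨n, hn⟩]
    simp [hζ1]
  · have hζ1 : ζ ≠ 1 := by
      intro h
      rw [hζ, Complex.exp_eq_one_iff] at h
      obtain ⟨n, hn⟩ := h
      apply hd
      refine ⟨n, ?_⟩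
      have h3 : (k : ℂ) = (M : ℂ) * n := by
        field_simp at hn
        apply mul_left_cancel₀ hI
        linear_combination (2 * (Real.pi : ℂ) * I) * hn
      exact_mod_cast h3
    have hζM : ζ ^ M = 1 := by
      rw [hζ, ← Complex.exp_nat_mul]
      have h4 : (M : ℂ) * (2 * Real.pi * I * k / M) = (k : ℤ) * (2 * Real.pi * I) := by
        push_cast; field_simp
      rw [h4, Complex.exp_int_mul_two_pi_mul_I]
    rw [if_neg hd, geom_sum_eq hζ1, hζM]
    simp

lemma partial_fractions (M : ℕ) (hM : 0 < M) (z : ℂ) (hz : z ^ M ≠ 1) :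
    ∑ m ∈ range M, (z - Complex.exp (2 * Real.pi * I * m / M))⁻¹
      = M * z ^ (M - 1) / (z ^ M - 1) := by
  have hM0 : (M : ℂ) ≠ 0 := Nat.cast_ne_zero.2 hM.ne'
  set ω : ℕ → ℂ := fun m => Complex.exp (2 * Real.pi * I * m / M) with hω
  have hroot : ∀ m : ℕ, ω m ^ M = 1 := by
    intro m
    rw [hω, ← Complex.exp_nat_mul]
    have h4 : (M : ℂ) * (2 * Real.pi * I * m / M) = (m : ℤ) * (2 * Real.pi * I) := by
      push_cast; field_simp
    rw [h4, Complex.exp_int_mul_two_pi_mul_I]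
  have hne : ∀ m : ℕ, z - ω m ≠ 0 := by
    intro m h
    rw [sub_eq_zero] at h
    exact hz (by rw [h, hroot])
  have hzM : z ^ M - 1 ≠ 0 := sub_ne_zero.2 hz
  have hterm : ∀ m : ℕ, (z - ω m)⁻¹
      = (∑ j ∈ range M, z ^ j * (ω m) ^ (M - 1 - j)) / (z ^ M - 1) := by
    intro m
    rw [eq_div_iff hzM]
    have key := geom_sum₂_mul z (ω m) M
    rw [hroot m] at key
    rw [← key]
    field_simp [hne m]
  have hinner : ∀ j ∈ range M, (∑ m ∈ range M, (ω m) ^ (M - 1 - j))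
      = if j = M - 1 then (M : ℂ) else 0 := by
    intro j hj
    rw [Finset.mem_range] at hj
    rw [hω]
    rw [sum_root_pow M hM (M - 1 - j)]
    congr 1
    rw [Int.natCast_dvd_natCast, eq_iff_iff]
    constructor
    · intro h
      have := Nat.eq_zero_of_dvd_of_lt h (by omega)
      omega
    · intro h; rw [h]; simp [Nat.sub_self]
  calc ∑ m ∈ range M, (z - ω m)⁻¹
      = ∑ m ∈ range M, (∑ j ∈ range M, z ^ j * (ω m) ^ (M - 1 - j)) / (z ^ M - 1) :=
        Finset.sum_congr rfl fun m _ => hterm m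
    _ = (∑ m ∈ range M, ∑ j ∈ range M, z ^ j * (ω m) ^ (M - 1 - j)) / (z ^ M - 1) := by
        rw [← Finset.sum_div]
    _ = (∑ j ∈ range M, z ^ j * ∑ m ∈ range M, (ω m) ^ (M - 1 - j)) / (z ^ M - 1) := by
        rw [Finset.sum_comm]
        congr 1
        exact Finset.sum_congr rfl fun j _ => (Finset.mul_sum _ _ _).symm
    _ = M * z ^ (M - 1) / (z ^ M - 1) := by
        congr 1
        rw [Finset.sum_congr rfl fun j hj => by rw [hinner j hj]]
        simp only [mul_ite, mul_zero, Finset.sum_ite_eq' (range M) (M - 1),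
          Finset.mem_range]
        rw [if_pos (by omega : M - 1 < M)]
        ring

open Complex Metric Finset

lemma circleIntegral_inv_eq_zero {a : ℝ} (ha : 0 ≤ a) {w : ℂ} (hw : a < ‖w‖) :
    (∮ z in C((0 : ℂ), a), (z - w)⁻¹) = 0 := by
  apply Complex.circleIntegral_eq_zero_of_differentiable_on_off_countable ha
    Set.countable_empty
  · intro z hz
    apply ContinuousAt.continuousWithinAt
    apply ContinuousAt.inv₀ (by fun_prop)
    intro h
    rw [sub_eq_zero] at h
    rw [mem_closedBall, Complex.dist_eq, sub_zero] at hz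
    rw [h] at hz
    exact absurd hz (not_le.2 hw)
  · intro z hz
    apply DifferentiableAt.inv (by fun_prop)
    intro h
    rw [sub_eq_zero] at h
    have := hz.1
    rw [mem_ball, Complex.dist_eq, sub_zero, h] at this
    exact absurd this.le (not_le.2 hw)

lemma annulus_cauchy {F : ℂ → ℂ} {a b : ℝ} (h0 : 0 < a) (hab : a ≤ b) {U : Set ℂ}
    (hU : IsOpen U) (hFU : DifferentiableOn ℂ F U)
    (hsub : closedBall (0 : ℂ) b \ ball (0 : ℂ) a ⊆ U) {w : ℂ}
    (hw1 : a < ‖w‖) (hw2 : ‖w‖ < b) :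
    (∮ z in C((0 : ℂ), b), (z - w)⁻¹ * F z) - (∮ z in C((0 : ℂ), a), (z - w)⁻¹ * F z)
      = 2 * Real.pi * I * F w := by
  have hb0 : (0 : ℝ) < b := h0.trans_le hab
  have hFd : ∀ z ∈ U, DifferentiableAt ℂ F z := fun z hz =>
    hFU.differentiableAt (hU.mem_nhds hz)
  have hmem : ∀ z : ℂ, a ≤ ‖z‖ → ‖z‖ ≤ b →
      z ∈ closedBall (0 : ℂ) b \ ball (0 : ℂ) a := by
    intro z h1 h2
    constructor
    · rwa [mem_closedBall, Complex.dist_eq, sub_zero]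
    · rw [mem_ball, Complex.dist_eq, sub_zero]; exact not_lt.2 h1
  have hwU : w ∈ U := hsub (hmem w hw1.le hw2.le)
  set g : ℂ → ℂ := dslope F w with hg
  have hgc : ContinuousOn g (closedBall (0 : ℂ) b \ ball (0 : ℂ) a) := by
    intro z hz
    rcases eq_or_ne z w with rfl | hzw
    · exact ((continuousAt_dslope_same).2 (hFd z hwU)).continuousWithinAt
    · exact (((continuousAt_dslope_of_ne hzw).2
        (hFd z (hsub hz)).continuousAt)).continuousWithinAt
  have hgd : ∀ z ∈ (ball (0 : ℂ) b \ closedBall (0 : ℂ) a) \ ({w} : Set ℂ),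
      DifferentiableAt ℂ g z := by
    intro z hz
    have hzw : z ≠ w := by simpa using hz.2
    exact (differentiableAt_dslope_of_ne hzw).2
      (hFd z (hsub ⟨ball_subset_closedBall hz.1.1, fun h => hz.1.2 (ball_subset_closedBall h)⟩))
  have key := Complex.circleIntegral_eq_of_differentiable_on_annulus_off_countable h0 hab
    (Set.countable_singleton w) hgc hgd
  have hsplit : ∀ t : ℝ, 0 < t → a ≤ t → t ≤ b → ‖w‖ ≠ t →
      (∮ z in C((0 : ℂ), t), g z)
        = (∮ z in C((0 : ℂ), t), (z - w)⁻¹ * F z) - (∮ z in C((0 : ℂ), t), (z - w)⁻¹) * F w := by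
    intro t ht hat htb hwt
    have hsph : ∀ z ∈ sphere (0 : ℂ) t, ‖z‖ = t := by
      intro z hz
      rwa [mem_sphere, Complex.dist_eq, sub_zero] at hz
    have hne : ∀ z ∈ sphere (0 : ℂ) t, z - w ≠ 0 := by
      intro z hz h
      rw [sub_eq_zero] at h
      exact hwt (by rw [← h]; exact hsph z hz)
    have hcF : ContinuousOn (fun z => (z - w)⁻¹ * F z) (sphere (0 : ℂ) t) := by
      apply ContinuousOn.mul
      · exact ContinuousOn.inv₀ (by fun_prop) hne
      · intro z hz
        exact (hFd z (hsub (hmem z (by rw [hsph z hz]; exact hat)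
          (by rw [hsph z hz]; exact htb)))).continuousAt.continuousWithinAt
    have hcI : ContinuousOn (fun z : ℂ => (z - w)⁻¹) (sphere (0 : ℂ) t) :=
      ContinuousOn.inv₀ (by fun_prop) hne
    have h1 : (∮ z in C((0 : ℂ), t), g z)
        = ∮ z in C((0 : ℂ), t), ((z - w)⁻¹ * F z - (z - w)⁻¹ * F w) := by
      apply circleIntegral.integral_congr ht.le
      intro z hz
      have hzw : z ≠ w := fun h => hne z hz (by rw [h, sub_self])
      rw [hg, dslope_of_ne F hzw, slope_def_field]
      field_simp [hne z hz]
    rw [h1, circleIntegral.integral_sub (f := fun z => (z - w)⁻¹ * F z) (g := fun z => (z - w)⁻¹ * F w)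
      (hcF.circleIntegrable ht.le) ((hcI.mul continuousOn_const).circleIntegrable ht.le)]
    congr 1
    have := circleIntegral.integral_smul_const (fun z : ℂ => (z - w)⁻¹) (F w) (0 : ℂ) t
    simpa [smul_eq_mul] using this
  have hzb : (∮ z in C((0 : ℂ), b), (z - w)⁻¹) = 2 * Real.pi * I :=
    circleIntegral.integral_sub_inv_of_mem_ball (by rwa [mem_ball, Complex.dist_eq, sub_zero])
  have hza : (∮ z in C((0 : ℂ), a), (z - w)⁻¹) = 0 := circleIntegral_inv_eq_zero h0.le hw1
  have hb' := hsplit b hb0 hab le_rfl hw2.ne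
  have ha' := hsplit a h0 le_rfl hab hw1.ne'
  rw [hb', ha', hzb, hza] at key
  linear_combination key


lemma circleIntegral_finset_sum {ι : Type*} (s : Finset ι) (f : ι → ℂ → ℂ) (c : ℂ) (R : ℝ)
    (h : ∀ i ∈ s, CircleIntegrable (f i) c R) :
    (∮ z in C(c, R), ∑ i ∈ s, f i z) = ∑ i ∈ s, ∮ z in C(c, R), f i z := by
  simp only [circleIntegral, Finset.smul_sum]
  rw [intervalIntegral.integral_finset_sum]
  intro i hi
  exact (h i hi).out

lemma circle_to_interval (F : ℂ → ℂ) :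
    (∮ z in C((0 : ℂ), 1), z⁻¹ * F z)
      = I * ∫ θ in (0 : ℝ)..(2 * Real.pi), F (Complex.exp (I * θ)) := by
  simp only [circleIntegral, deriv_circleMap, smul_eq_mul]
  rw [← intervalIntegral.integral_const_mul]
  apply intervalIntegral.integral_congr
  intro θ hθ
  have h2 : circleMap 0 1 θ = Complex.exp (I * θ) := by
    simp [circleMap, mul_comm]
  have h : circleMap 0 1 θ ≠ 0 := by
    rw [h2]; exact Complex.exp_ne_zero _
  simp only []
  rw [h2]
  field_simp [Complex.exp_ne_zero]

set_option maxHeartbeats 1600000 in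
/-- Exponential decay of the equidistant quadrature error for the boundary
restriction of a function holomorphic on an annulus `{r < |z| < R}` with
`r < 1 < R`: for any `ρ` with `max(r, 1/R) < ρ < 1` the error of the
`M`-point rule is `O(ρ^M)`. -/
theorem equidistant_quadrature_analytic (r R : ℝ) (hr : r < 1) (hR : 1 < R)
    (hr0 : 0 ≤ r)
    (F : ℂ → ℂ) (hF : DifferentiableOn ℂ F {z : ℂ | r < ‖z‖ ∧ ‖z‖ < R})
    (f : ℝ → ℂ) (hf : ∀ φ, f φ = F (Complex.exp (I * φ)))
    (ρ : ℝ) (hρ₁ : max r R⁻¹ < ρ) (hρ₂ : ρ < 1) :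
    ∃ C : ℝ, ∀ M : ℕ, 1 ≤ M →
      ‖((M : ℂ)⁻¹ * ∑ m ∈ Finset.range M, f (2 * Real.pi * m / M)
        - (2 * Real.pi)⁻¹ * ∫ φ in (0 : ℝ)..(2 * Real.pi), f φ)‖
        ≤ C * ρ ^ M := by
  have hR0 : (0 : ℝ) < R := by linarith
  have hρ0 : (0 : ℝ) < ρ := lt_of_le_of_lt (le_max_right r R⁻¹) hρ₁ |>.trans_le' (inv_pos.2 hR0).le
  have hra : r < ρ := lt_of_le_of_lt (le_max_left r R⁻¹) hρ₁
  have hRi : R⁻¹ < ρ := lt_of_le_of_lt (le_max_right r R⁻¹) hρ₁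
  have hb1 : 1 < ρ⁻¹ := by
    have h := mul_inv_cancel₀ hρ0.ne'
    nlinarith [inv_pos.2 hρ0]
  have hbR : ρ⁻¹ < R := by
    have h1 := mul_inv_cancel₀ hρ0.ne'
    have h2 := mul_inv_cancel₀ hR0.ne'
    nlinarith [inv_pos.2 hρ0, inv_pos.2 hR0]
  have hab : ρ ≤ ρ⁻¹ := by linarith
  have h1ρ : (0:ℝ) < 1 - ρ := by linarith
  set U : Set ℂ := {z : ℂ | r < ‖z‖ ∧ ‖z‖ < R} with hUdef
  have hU : IsOpen U := by
    have : U = (fun z : ℂ => ‖z‖) ⁻¹' Set.Ioo r R := by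
      ext z; simp [hUdef, Set.mem_Ioo]
    rw [this]
    exact isOpen_Ioo.preimage continuous_norm
  have hsub : closedBall (0 : ℂ) ρ⁻¹ \ ball (0 : ℂ) ρ ⊆ U := by
    rintro z ⟨h1, h2⟩
    rw [mem_closedBall, Complex.dist_eq, sub_zero] at h1
    rw [mem_ball, Complex.dist_eq, sub_zero] at h2
    exact ⟨lt_of_lt_of_le hra (not_lt.1 h2), lt_of_le_of_lt h1 hbR⟩
  set K : Set ℂ := closedBall (0 : ℂ) ρ⁻¹ \ ball (0 : ℂ) ρ with hKdef
  have hKc : IsCompact K := (isCompact_closedBall _ _).diff isOpen_ball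
  have hFK : ContinuousOn F K := (hF.continuousOn).mono hsub
  obtain ⟨B, hB⟩ := hKc.exists_bound_of_continuousOn hFK
  set B' : ℝ := max B 0 with hB'def
  have hB'0 : 0 ≤ B' := le_max_right _ _
  have hB' : ∀ z ∈ K, ‖F z‖ ≤ B' := fun z hz =>
    (hB z hz).trans (le_max_left _ _)
  refine ⟨2 * B' / (1 - ρ), ?_⟩
  intro M hM
  obtain ⟨N, rfl⟩ : ∃ N, M = N + 1 := ⟨M - 1, (Nat.succ_pred_eq_of_pos hM).symm⟩
  set M := N + 1 with hMdef
  have hMpos : 0 < M := Nat.succ_pos N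
  have hM0 : (M : ℂ) ≠ 0 := Nat.cast_ne_zero.2 hMpos.ne'
  have hMR : (0:ℝ) < M := Nat.cast_pos.2 hMpos
  set ω : ℕ → ℂ := fun m => Complex.exp (2 * Real.pi * I * m / M) with hω
  have habs1 : ∀ m : ℕ, ‖ω m‖ = 1 := by
    intro m
    have h : (2 * Real.pi * I * m / M : ℂ) = ((2 * Real.pi * m / M : ℝ) : ℂ) * I := by
      push_cast; ring
    rw [hω]; simp only [h]
    exact Complex.norm_exp_ofReal_mul_I _
  -- membership helpers for spheres
  have hsphb : ∀ z ∈ sphere (0 : ℂ) ρ⁻¹, ‖z‖ = ρ⁻¹ := by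
    intro z hz; rwa [mem_sphere, Complex.dist_eq, sub_zero] at hz
  have hspha : ∀ z ∈ sphere (0 : ℂ) ρ, ‖z‖ = ρ := by
    intro z hz; rwa [mem_sphere, Complex.dist_eq, sub_zero] at hz
  have hsphbU : sphere (0 : ℂ) ρ⁻¹ ⊆ K := by
    intro z hz
    constructor
    · rw [mem_closedBall, Complex.dist_eq, sub_zero, hsphb z hz]
    · rw [mem_ball, Complex.dist_eq, sub_zero, hsphb z hz]; exact not_lt.2 hab
  have hsphaU : sphere (0 : ℂ) ρ ⊆ K := by
    intro z hz
    constructor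
    · rw [mem_closedBall, Complex.dist_eq, sub_zero, hspha z hz]; exact hab
    · rw [mem_ball, Complex.dist_eq, sub_zero, hspha z hz]
      exact lt_irrefl ρ
  have hFd : ∀ z ∈ U, DifferentiableAt ℂ F z := fun z hz =>
    hF.differentiableAt (hU.mem_nhds hz)
  have hFcb : ContinuousOn F (sphere (0 : ℂ) ρ⁻¹) := hFK.mono hsphbU
  have hFca : ContinuousOn F (sphere (0 : ℂ) ρ) := hFK.mono hsphaU
  -- nonvanishing of z^M - 1 on the two spheres
  have hbM : (1:ℝ) < (ρ⁻¹) ^ M := one_lt_pow₀ hb1 (Nat.succ_ne_zero N)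
  have haM : ρ ^ M < 1 := pow_lt_one₀ hρ0.le hρ₂ (Nat.succ_ne_zero N)
  have hzMb : ∀ z ∈ sphere (0 : ℂ) ρ⁻¹, z ^ M ≠ 1 := by
    intro z hz h
    have h1 : ((ρ⁻¹) ^ M : ℝ) = 1 := by
      have h2 := congrArg (‖·‖) h
      rwa [norm_pow, hsphb z hz, norm_one] at h2
    linarith
  have hzMa : ∀ z ∈ sphere (0 : ℂ) ρ, z ^ M ≠ 1 := by
    intro z hz h
    have h1 : (ρ ^ M : ℝ) = 1 := by
      have h2 := congrArg (‖·‖) h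
      rwa [norm_pow, hspha z hz, norm_one] at h2
    linarith
  have hz0b : ∀ z ∈ sphere (0 : ℂ) ρ⁻¹, z ≠ 0 := by
    intro z hz h
    apply (inv_pos.2 hρ0).ne'
    rw [← hsphb z hz, h, norm_zero]
  have hz0a : ∀ z ∈ sphere (0 : ℂ) ρ, z ≠ 0 := by
    intro z hz h
    apply hρ0.ne'
    rw [← hspha z hz, h, norm_zero]
  have hzωb : ∀ (m : ℕ), ∀ z ∈ sphere (0:ℂ) ρ⁻¹, z - ω m ≠ 0 := by
    intro m z hz h
    rw [sub_eq_zero] at h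
    have h2 := hsphb z hz
    rw [h, habs1 m] at h2
    linarith
  have hzωa : ∀ (m : ℕ), ∀ z ∈ sphere (0:ℂ) ρ, z - ω m ≠ 0 := by
    intro m z hz h
    rw [sub_eq_zero] at h
    have h2 := hspha z hz
    rw [h, habs1 m] at h2
    linarith
  have hb0' : (0:ℝ) ≤ ρ⁻¹ := by positivity
  have hib : ∀ m : ℕ, CircleIntegrable (fun z => (z - ω m)⁻¹ * F z) 0 ρ⁻¹ := fun m =>
    ContinuousOn.circleIntegrable hb0'
      ((ContinuousOn.inv₀ (by fun_prop) (hzωb m)).mul hFcb)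
  have hia : ∀ m : ℕ, CircleIntegrable (fun z => (z - ω m)⁻¹ * F z) 0 ρ := fun m =>
    ContinuousOn.circleIntegrable hρ0.le
      ((ContinuousOn.inv₀ (by fun_prop) (hzωa m)).mul hFca)
  have hcau : ∀ m ∈ Finset.range M,
      (∮ z in C((0:ℂ), ρ⁻¹), (z - ω m)⁻¹ * F z) - (∮ z in C((0:ℂ), ρ), (z - ω m)⁻¹ * F z)
        = 2 * Real.pi * I * F (ω m) := fun m _ =>
    annulus_cauchy hρ0 hab hU hF hsub (by rw [habs1]; exact hρ₂) (by rw [habs1]; exact hb1)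
  set S : ℂ := ∑ m ∈ Finset.range M, F (ω m) with hSdef
  have hsum1 : (∮ z in C((0:ℂ), ρ⁻¹), (∑ m ∈ Finset.range M, (z - ω m)⁻¹) * F z)
      - (∮ z in C((0:ℂ), ρ), (∑ m ∈ Finset.range M, (z - ω m)⁻¹) * F z)
      = 2 * Real.pi * I * S := by
    have hb : (∮ z in C((0:ℂ), ρ⁻¹), (∑ m ∈ Finset.range M, (z - ω m)⁻¹) * F z)
        = ∑ m ∈ Finset.range M, ∮ z in C((0:ℂ), ρ⁻¹), (z - ω m)⁻¹ * F z := by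
      simp only [Finset.sum_mul]
      exact circleIntegral_finset_sum _ _ _ _ (fun m _ => hib m)
    have ha : (∮ z in C((0:ℂ), ρ), (∑ m ∈ Finset.range M, (z - ω m)⁻¹) * F z)
        = ∑ m ∈ Finset.range M, ∮ z in C((0:ℂ), ρ), (z - ω m)⁻¹ * F z := by
      simp only [Finset.sum_mul]
      exact circleIntegral_finset_sum _ _ _ _ (fun m _ => hia m)
    rw [hb, ha, ← Finset.sum_sub_distrib, hSdef, Finset.mul_sum]
    exact Finset.sum_congr rfl hcau
  have hkerb : (∮ z in C((0:ℂ), ρ⁻¹), (∑ m ∈ Finset.range M, (z - ω m)⁻¹) * F z)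
      = ∮ z in C((0:ℂ), ρ⁻¹), (M : ℂ) * z ^ (M - 1) / (z ^ M - 1) * F z := by
    apply circleIntegral.integral_congr hb0'
    intro z hz
    simp only [hω]
    rw [partial_fractions M hMpos z (hzMb z hz)]
  have hkera : (∮ z in C((0:ℂ), ρ), (∑ m ∈ Finset.range M, (z - ω m)⁻¹) * F z)
      = ∮ z in C((0:ℂ), ρ), (M : ℂ) * z ^ (M - 1) / (z ^ M - 1) * F z := by
    apply circleIntegral.integral_congr hρ0.le
    intro z hz
    simp only [hω]
    rw [partial_fractions M hMpos z (hzMa z hz)]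
  -- mean value as contour integral over radius ρ⁻¹
  set T : ℂ := ∫ φ in (0:ℝ)..(2*Real.pi), f φ with hTdef
  have ha0 : (∮ z in C((0:ℂ), ρ⁻¹), z⁻¹ * F z) = I * T := by
    have hKsub : closedBall (0:ℂ) ρ⁻¹ \ ball (0:ℂ) 1 ⊆ K := by
      rintro z ⟨h1, h2⟩
      refine ⟨h1, fun h3 => h2 ?_⟩
      rw [mem_ball, Complex.dist_eq, sub_zero] at h3 ⊢
      linarith
    have hshift : (∮ z in C((0:ℂ), ρ⁻¹), z⁻¹ * F z) = ∮ z in C((0:ℂ), 1), z⁻¹ * F z := by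
      apply Complex.circleIntegral_eq_of_differentiable_on_annulus_off_countable one_pos hb1.le
        Set.countable_empty
      · intro z hz
        have hz0 : z ≠ 0 := by
          intro h
          have := hz.2
          rw [h] at this
          exact this (by simpa using one_pos)
        apply ContinuousAt.continuousWithinAt
        exact (continuousAt_id.inv₀ hz0).mul (hFd z (hsub (hKsub hz))).continuousAt
      · intro z hz
        have hz0 : z ≠ 0 := by
          intro h
          have := hz.1.2
          rw [h] at this
          exact this (by simpa using one_pos)
        have hzK : z ∈ K := hKsub ⟨ball_subset_closedBall hz.1.1, fun h => hz.1.2 (ball_subset_closedBall h)⟩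
        exact (differentiableAt_id.inv hz0).mul (hFd z (hsub hzK))
    rw [hshift, circle_to_interval]
    rw [hTdef]
    congr 1
    apply intervalIntegral.integral_congr
    intro θ _
    exact (hf θ).symm
  -- combine into two contour integrals
  have hK1b : CircleIntegrable (fun z => (M:ℂ) * z ^ (M-1) / (z^M - 1) * F z) 0 ρ⁻¹ :=
    ContinuousOn.circleIntegrable hb0'
      ((((continuous_const.mul (continuous_pow (M-1))).continuousOn).div
        (((continuous_pow M).sub continuous_const).continuousOn)
        (fun z hz => sub_ne_zero.2 (hzMb z hz))).mul hFcb)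
  have hK1a : CircleIntegrable (fun z => (M:ℂ) * z ^ (M-1) / (z^M - 1) * F z) 0 ρ :=
    ContinuousOn.circleIntegrable hρ0.le
      ((((continuous_const.mul (continuous_pow (M-1))).continuousOn).div
        (((continuous_pow M).sub continuous_const).continuousOn)
        (fun z hz => sub_ne_zero.2 (hzMa z hz))).mul hFca)
  have hK2b : CircleIntegrable (fun z => (M:ℂ) * (z⁻¹ * F z)) 0 ρ⁻¹ :=
    ContinuousOn.circleIntegrable hb0'
      (continuousOn_const.mul ((ContinuousOn.inv₀ continuousOn_id (hz0b)).mul hFcb))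
  set P : ℂ := ∮ z in C((0:ℂ), ρ⁻¹), (M:ℂ) / (z * (z^M - 1)) * F z with hPdef
  set Q : ℂ := ∮ z in C((0:ℂ), ρ), (M:ℂ) * z ^ (M-1) / (z^M - 1) * F z with hQdef
  have hPeq : (∮ z in C((0:ℂ), ρ⁻¹), (M:ℂ) * z ^ (M-1) / (z^M - 1) * F z)
      - (M:ℂ) * (I * T) = P := by
    rw [← ha0, ← circleIntegral.integral_const_mul, ← circleIntegral.integral_sub hK1b hK2b,
      hPdef]
    apply circleIntegral.integral_congr hb0'
    intro z hz
    simp only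
    have h1 := hz0b z hz
    have h2 : z^M - 1 ≠ 0 := sub_ne_zero.2 (hzMb z hz)
    have h2' : z ^ (N + 1) - 1 ≠ 0 := by rwa [← hMdef]
    simp only [hMdef, Nat.add_sub_cancel]
    field_simp
    ring
  rw [hkerb, hkera] at hsum1
  have hgrand : 2*(Real.pi:ℂ)*I*S - (M:ℂ)*(I*T) = P - Q := by
    linear_combination hPeq - hsum1
  -- identify the quadrature sum
  have hfS : ∑ m ∈ Finset.range M, f (2 * Real.pi * m / M) = S := by
    rw [hSdef]
    refine Finset.sum_congr rfl fun m _ => ?_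
    rw [hf]
    simp only [hω]
    congr 1
    push_cast
    ring
  have hπ : (Real.pi : ℂ) ≠ 0 := ofReal_ne_zero.2 Real.pi_ne_zero
  have hE : (2*(Real.pi:ℂ)*I*(M:ℂ)) *
      ((M : ℂ)⁻¹ * ∑ m ∈ Finset.range M, f (2 * Real.pi * m / M)
        - (2 * Real.pi)⁻¹ * T) = P - Q := by
    rw [hfS]
    have hstep : (2*(Real.pi:ℂ)*I*(M:ℂ)) * ((M : ℂ)⁻¹ * S - (2 * Real.pi)⁻¹ * T)
        = 2*(Real.pi:ℂ)*I*S - (M:ℂ)*(I*T) := by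
      have h2π : ((2:ℂ) * (Real.pi:ℂ)) ≠ 0 := by
        simp [Real.pi_ne_zero]
      push_cast
      field_simp
    rw [hstep, hgrand]
  -- norm bounds
  have hρMρ : ρ ^ M ≤ ρ := by
    calc ρ ^ M = ρ ^ N * ρ := by rw [hMdef, pow_succ]
    _ ≤ 1 * ρ := mul_le_mul_of_nonneg_right (pow_le_one₀ hρ0.le hρ₂.le) hρ0.le
    _ = ρ := one_mul ρ
  have hprod : ρ ^ M * (ρ⁻¹) ^ M = 1 := by
    rw [← mul_pow, mul_inv_cancel₀ hρ0.ne', one_pow]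
  have hkeyb : ∀ z ∈ sphere (0:ℂ) ρ⁻¹, 1 - ρ ≤ ρ ^ M * ‖z ^ M - 1‖ := by
    intro z hz
    have h2 : (ρ⁻¹) ^ M - 1 ≤ ‖z ^ M - 1‖ := by
      have h3 := norm_sub_norm_le (z ^ M) 1
      simpa [norm_pow, hsphb z hz] using h3
    nlinarith [mul_le_mul_of_nonneg_left h2 (pow_nonneg hρ0.le M)]
  have hkeya : ∀ z ∈ sphere (0:ℂ) ρ, 1 - ρ ≤ ‖z ^ M - 1‖ := by
    intro z hz
    have h4 : ‖1 - z ^ M‖ = ‖z ^ M - 1‖ :=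
      norm_sub_rev 1 (z ^ M)
    have h2 : 1 - ρ ^ M ≤ ‖z ^ M - 1‖ := by
      have h3 := norm_sub_norm_le (1:ℂ) (z ^ M)
      simpa [norm_pow, hspha z hz, h4] using h3
    linarith
  have hptb : ∀ z ∈ sphere (0:ℂ) ρ⁻¹,
      ‖(M:ℂ) / (z * (z ^ M - 1)) * F z‖ ≤ (M:ℝ) * B' * (ρ ^ M * ρ) / (1 - ρ) := by
    intro z hz
    have hD := hkeyb z hz
    have hFz := hB' z (hsphbU hz)
    have hDpos : 0 < ‖z ^ M - 1‖ :=
      norm_pos_iff.2 (sub_ne_zero.2 (hzMb z hz))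
    rw [norm_mul, norm_div, norm_mul, hsphb z hz, Complex.norm_natCast]
    set D := ‖z ^ M - 1‖ with hDdef
    rw [div_mul_eq_mul_div, div_le_div_iff₀ (by positivity) h1ρ]
    have h6 : ‖F z‖ * (1 - ρ) ≤ B' * (ρ ^ M * D) :=
      mul_le_mul hFz hD h1ρ.le hB'0
    have h7 : ρ * ρ⁻¹ = 1 := mul_inv_cancel₀ hρ0.ne'
    have h8 : ((M:ℝ) * B' * (ρ ^ M * ρ)) * (ρ⁻¹ * D) = (M:ℝ) * (B' * (ρ ^ M * D)) := by
      field_simp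
    rw [h8]
    nlinarith [mul_le_mul_of_nonneg_left h6 hMR.le]
  have hpta : ∀ z ∈ sphere (0:ℂ) ρ,
      ‖(M:ℂ) * z ^ (M-1) / (z ^ M - 1) * F z‖ ≤ (M:ℝ) * B' * ρ ^ N / (1 - ρ) := by
    intro z hz
    have hD := hkeya z hz
    have hFz := hB' z (hsphaU hz)
    have hDpos : 0 < ‖z ^ M - 1‖ :=
      norm_pos_iff.2 (sub_ne_zero.2 (hzMa z hz))
    rw [norm_mul, norm_div, norm_mul, norm_pow, hspha z hz,
      Complex.norm_natCast]
    have hN : ρ ^ (M - 1) = ρ ^ N := by norm_num [hMdef]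
    rw [hN, div_mul_eq_mul_div, div_le_div_iff₀ hDpos h1ρ]
    set D := ‖z ^ M - 1‖ with hDdef
    have h6 : ‖F z‖ * (1 - ρ) ≤ B' * D := mul_le_mul hFz hD h1ρ.le hB'0
    nlinarith [mul_le_mul_of_nonneg_left h6 (by positivity : (0:ℝ) ≤ (M:ℝ) * ρ ^ N)]
  have hPn : ‖P‖ ≤ 2 * Real.pi * ρ⁻¹ * ((M:ℝ) * B' * (ρ ^ M * ρ) / (1 - ρ)) := by
    rw [hPdef]
    exact circleIntegral.norm_integral_le_of_norm_le_const hb0' hptb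
  have hQn : ‖Q‖ ≤ 2 * Real.pi * ρ * ((M:ℝ) * B' * ρ ^ N / (1 - ρ)) := by
    rw [hQdef]
    exact circleIntegral.norm_integral_le_of_norm_le_const hρ0.le hpta
  have hPn' : ‖P‖ ≤ 2 * Real.pi * (M:ℝ) * B' * ρ ^ M / (1 - ρ) := by
    refine hPn.trans (le_of_eq ?_)
    field_simp
  have hQn' : ‖Q‖ ≤ 2 * Real.pi * (M:ℝ) * B' * ρ ^ M / (1 - ρ) := by
    refine hQn.trans (le_of_eq ?_)
    have h5 : ρ ^ M = ρ ^ N * ρ := by rw [hMdef, pow_succ]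
    rw [h5]
    field_simp
  have hnormPQ : ‖P - Q‖ ≤ 4 * Real.pi * (M:ℝ) * B' * ρ ^ M / (1 - ρ) := by
    calc ‖P - Q‖ ≤ ‖P‖ + ‖Q‖ := norm_sub_le P Q
    _ ≤ _ := by
      ring_nf at hPn' hQn' ⊢
      linarith
  have habs2 : ‖2*(Real.pi:ℂ)*I*(M:ℂ)‖ = 2 * Real.pi * (M:ℝ) := by
    rw [norm_mul, norm_mul, norm_mul]
    simp [Complex.norm_natCast, Complex.norm_real, abs_of_pos Real.pi_pos]
  rw [← mul_le_mul_iff_right₀ (show (0:ℝ) < 2 * Real.pi * (M:ℝ) from by positivity)]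
  have h9 : 2 * Real.pi * (M:ℝ) * ‖(M : ℂ)⁻¹ *
      ∑ m ∈ Finset.range M, f (2 * Real.pi * m / M) - (2 * Real.pi)⁻¹ * T‖
      = ‖P - Q‖ := by
    rw [← habs2, ← norm_mul, hE]
  rw [h9]
  have h10 : ‖P - Q‖ ≤ 4 * Real.pi * (M:ℝ) * B' * ρ ^ M / (1 - ρ) := by
    exact hnormPQ
  refine h10.trans (le_of_eq ?_)
  field_simp
  ring
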